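/- Let x ∈ ℝⁿ with x ≠ 0, and let φ : ℝⁿ → ℝ^d be eventually affine along the ray of x, with matrix U ∈ ℝ^{d×n} and offset c ∈ ℝ^d, and suppose Ux ≠ 0. Let Σ ∈ ℝ^{d×d} be a symmetric positive definite matrix whose smallest eigenvalue is λ₁ > 0, and let μ ∈ ℝ^d. Define z(x') = μᵀφ(x') / √(1 + (π/8)·φ(x')ᵀ Σ φ(x')) for x' ∈ ℝⁿ. Then the limit lim_{δ→∞} σ(|z(δx)|) exists and satisfies lim_{δ→∞} σ(|z(δx)|) ≤ σ( ‖μ‖ / √((π/8)·λ₁) ), where ‖μ‖ is the Euclidean norm of μ. -/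

import Mathlib

open Matrix Filter

/-- The logistic sigmoid `σ(t) = 1 / (1 + exp (-t))`. -/
noncomputable def sigmoid (t : ℝ) : ℝ := 1 / (1 + Real.exp (-t))

lemma sigmoid_mono {s t : ℝ} (h : s ≤ t) : sigmoid s ≤ sigmoid t := by
  unfold sigmoid
  apply one_div_le_one_div_of_le
  · positivity
  · have : Real.exp (-t) ≤ Real.exp (-s) := Real.exp_le_exp.2 (by linarith)
    linarith

lemma continuous_sigmoid' : Continuous sigmoid := by
  apply Continuous.div continuous_const
  · continuity
  · intro t; positivity

/-- `lam₁ ≤` every eigenvalue implies the quadratic form dominates `lam₁ * ‖w‖²`. -/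
lemma quadform_ge_min_eig {d : ℕ} (S : Matrix (Fin d) (Fin d) ℝ) (hS : S.IsHermitian) (lam₁ : ℝ)
    (hlam_min : ∀ lam : ℝ, (∃ w : Fin d → ℝ, w ≠ 0 ∧ S.mulVec w = lam • w) → lam₁ ≤ lam) :
    ∀ w : Fin d → ℝ, lam₁ * (w ⬝ᵥ w) ≤ w ⬝ᵥ S.mulVec w := by
  intro w
  set T : Matrix (Fin d) (Fin d) ℝ := S - lam₁ • 1 with hT_def
  have hT : T.IsHermitian := hS.sub (by simp [Matrix.IsHermitian, conjTranspose_smul])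
  have hTmul : ∀ u : Fin d → ℝ, T *ᵥ u = S *ᵥ u - lam₁ • u := by
    intro u
    simp [hT_def, sub_mulVec, smul_mulVec, one_mulVec]
  have heig : ∀ j, 0 ≤ hT.eigenvalues j := by
    intro j
    have hu : (⇑(hT.eigenvectorBasis j) : Fin d → ℝ) ≠ 0 := by
      have h0 := hT.eigenvectorBasis.orthonormal.ne_zero j
      exact fun h => h0 (by ext i; exact congrFun h i)
    have hmv := hT.mulVec_eigenvectorBasis j
    rw [hTmul] at hmv
    have hS' : S *ᵥ ⇑(hT.eigenvectorBasis j) =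
        (hT.eigenvalues j + lam₁) • ⇑(hT.eigenvectorBasis j) := by
      have := sub_eq_iff_eq_add.mp hmv
      rw [this, add_smul]
    have := hlam_min (hT.eigenvalues j + lam₁) ⟨_, hu, hS'⟩
    linarith
  have hpsd : T.PosSemidef := hT.posSemidef_iff_eigenvalues_nonneg.mpr heig
  have h0 := hpsd.dotProduct_mulVec_nonneg w
  rw [hTmul] at h0
  simp only [star_trivial, dotProduct_sub, dotProduct_smul, smul_eq_mul] at h0
  linarith

/-- Asymptotic confidence bound for a Bayesian last layer over a feature map that is
eventually affine along the ray of `x`. -/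
theorem asymptotic_confidence_bound {n d : ℕ}
    (x : Fin n → ℝ) (hx : x ≠ 0)
    (φ : (Fin n → ℝ) → (Fin d → ℝ))
    (U : Matrix (Fin d) (Fin n) ℝ) (c : Fin d → ℝ)
    (δ₀ : ℝ) (hδ₀ : 0 < δ₀)
    (hφ : ∀ δ : ℝ, δ₀ ≤ δ → φ (δ • x) = δ • U.mulVec x + c)
    (hUx : U.mulVec x ≠ 0)
    (S : Matrix (Fin d) (Fin d) ℝ) (hSsymm : S.IsSymm) (hSpd : S.PosDef)
    (lam₁ : ℝ) (hlam_pos : 0 < lam₁)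
    (hlam_eig : ∃ w : Fin d → ℝ, w ≠ 0 ∧ S.mulVec w = lam₁ • w)
    (hlam_min : ∀ lam : ℝ, (∃ w : Fin d → ℝ, w ≠ 0 ∧ S.mulVec w = lam • w) → lam₁ ≤ lam)
    (μ : Fin d → ℝ)
    (z : (Fin n → ℝ) → ℝ)
    (hz : ∀ x' : Fin n → ℝ,
      z x' = (μ ⬝ᵥ φ x') / Real.sqrt (1 + (Real.pi / 8) * (φ x' ⬝ᵥ S.mulVec (φ x')))) :
    ∃ L : ℝ,
      Tendsto (fun δ : ℝ => sigmoid |z (δ • x)|) atTop (nhds L) ∧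
        L ≤ sigmoid (Real.sqrt (∑ i, (μ i) ^ 2) / Real.sqrt ((Real.pi / 8) * lam₁)) := by
  set v : Fin d → ℝ := U.mulVec x with hv_def
  set a : ℝ := μ ⬝ᵥ v with ha_def
  set b : ℝ := μ ⬝ᵥ c with hb_def
  set A2 : ℝ := v ⬝ᵥ S.mulVec v with hA2_def
  set A1 : ℝ := v ⬝ᵥ S.mulVec c + c ⬝ᵥ S.mulVec v with hA1_def
  set A0 : ℝ := c ⬝ᵥ S.mulVec c with hA0_def
  have hπ : (0:ℝ) < Real.pi / 8 := by positivity
  have hA2pos : 0 < A2 := by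
    have := hSpd.dotProduct_mulVec_pos hUx
    simpa [hA2_def] using this
  set P : ℝ := (Real.pi / 8) * A2 with hP_def
  have hPpos : 0 < P := by positivity
  have hsqrtP : 0 < Real.sqrt P := Real.sqrt_pos.2 hPpos
  set Z : ℝ := a / Real.sqrt P with hZ_def
  refine ⟨sigmoid |Z|, ?_, ?_⟩
  · -- the limit
    set g : ℝ → ℝ := fun δ =>
      (a + b / δ) / Real.sqrt (P + (Real.pi / 8) * A1 / δ + ((Real.pi / 8) * A0 + 1) / δ ^ 2)
      with hg_def
    have heq : (fun δ : ℝ => z (δ • x)) =ᶠ[atTop] g := by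
      filter_upwards [eventually_ge_atTop (max δ₀ 1)] with δ hδ
      have hδ0 : δ₀ ≤ δ := le_trans (le_max_left _ _) hδ
      have hδ1 : (1:ℝ) ≤ δ := le_trans (le_max_right _ _) hδ
      have hδpos : (0:ℝ) < δ := lt_of_lt_of_le one_pos hδ1
      have hδne : δ ≠ 0 := ne_of_gt hδpos
      rw [hz, hφ δ hδ0]
      have hnum : μ ⬝ᵥ (δ • v + c) = δ * a + b := by
        simp [dotProduct_add, dotProduct_smul, ha_def, hb_def, smul_eq_mul]
      have hquad : (δ • v + c) ⬝ᵥ S *ᵥ (δ • v + c) = δ ^ 2 * A2 + δ * A1 + A0 := by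
        simp only [mulVec_add, mulVec_smul, dotProduct_add, add_dotProduct,
          smul_dotProduct, dotProduct_smul, smul_eq_mul, hA2_def, hA1_def, hA0_def]
        ring
      rw [hnum, hquad]
      have harg : 1 + Real.pi / 8 * (δ ^ 2 * A2 + δ * A1 + A0)
          = δ ^ 2 * (P + (Real.pi / 8) * A1 / δ + ((Real.pi / 8) * A0 + 1) / δ ^ 2) := by
        field_simp [hP_def]
        ring
      rw [harg, Real.sqrt_mul (sq_nonneg δ), Real.sqrt_sq hδpos.le]
      rw [hg_def]
      beta_reduce
      have : a + b / δ = (δ * a + b) / δ := by field_simp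
      rw [this, div_div]
    have hnum : Tendsto (fun δ : ℝ => a + b / δ) atTop (nhds a) := by
      have : Tendsto (fun δ : ℝ => b / δ) atTop (nhds 0) :=
        Tendsto.div_atTop tendsto_const_nhds tendsto_id
      simpa using tendsto_const_nhds.add this
    have hden : Tendsto (fun δ : ℝ =>
        Real.sqrt (P + (Real.pi / 8) * A1 / δ + ((Real.pi / 8) * A0 + 1) / δ ^ 2)) atTop
        (nhds (Real.sqrt P)) := by
      have h1 : Tendsto (fun δ : ℝ => (Real.pi / 8) * A1 / δ) atTop (nhds 0) :=
        Tendsto.div_atTop tendsto_const_nhds tendsto_id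
      have h2 : Tendsto (fun δ : ℝ => ((Real.pi / 8) * A0 + 1) / δ ^ 2) atTop (nhds 0) :=
        Tendsto.div_atTop tendsto_const_nhds (tendsto_pow_atTop two_ne_zero)
      have : Tendsto (fun δ : ℝ =>
          P + (Real.pi / 8) * A1 / δ + ((Real.pi / 8) * A0 + 1) / δ ^ 2) atTop (nhds P) := by
        simpa using (tendsto_const_nhds.add h1).add h2
      exact (Real.continuous_sqrt.tendsto P).comp this
    have hg : Tendsto g atTop (nhds Z) := hnum.div hden (ne_of_gt hsqrtP)
    have hzlim : Tendsto (fun δ : ℝ => z (δ • x)) atTop (nhds Z) :=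
      Tendsto.congr' heq.symm hg
    exact ((continuous_sigmoid'.comp continuous_abs).tendsto Z).comp hzlim
  · -- the bound
    apply sigmoid_mono
    -- |Z| ≤ √(Σμ²)/√((π/8)λ₁)
    have hCS : |a| ≤ Real.sqrt (∑ i, (μ i) ^ 2) * Real.sqrt (∑ i, (v i) ^ 2) := by
      rcases abs_cases a with ⟨h, _⟩ | ⟨h, _⟩
      · rw [h, ha_def]
        exact Real.sum_mul_le_sqrt_mul_sqrt Finset.univ μ v
      · rw [h]
        have := Real.sum_mul_le_sqrt_mul_sqrt Finset.univ μ (fun i => -v i)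
        simpa [dotProduct, mul_neg, ← Finset.sum_neg_distrib, ha_def] using this
    have hvne : ∃ i, v i ≠ 0 := Function.ne_iff.mp hUx
    have hvsum : 0 < ∑ i, (v i) ^ 2 := by
      obtain ⟨i, hi⟩ := hvne
      apply Finset.sum_pos' (fun j _ => sq_nonneg _) ⟨i, Finset.mem_univ i, by positivity⟩
    have hvsqrt : 0 < Real.sqrt (∑ i, (v i) ^ 2) := Real.sqrt_pos.2 hvsum
    have hA2ge : lam₁ * (∑ i, (v i) ^ 2) ≤ A2 := by
      have := quadform_ge_min_eig S hSpd.1 lam₁ hlam_min v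
      have hdot : v ⬝ᵥ v = ∑ i, (v i) ^ 2 := by
        simp [dotProduct, sq]
      rw [hdot] at this
      exact this
    have hPge : (Real.pi / 8) * lam₁ * (∑ i, (v i) ^ 2) ≤ P := by
      rw [hP_def]
      have := mul_le_mul_of_nonneg_left hA2ge hπ.le
      linarith [this]
    have hsplit : Real.sqrt ((Real.pi / 8) * lam₁ * (∑ i, (v i) ^ 2))
        = Real.sqrt ((Real.pi / 8) * lam₁) * Real.sqrt (∑ i, (v i) ^ 2) :=
      Real.sqrt_mul (by positivity) _
    have hsqrtlam : 0 < Real.sqrt ((Real.pi / 8) * lam₁) := Real.sqrt_pos.2 (by positivity)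
    have hPsqrt_ge : Real.sqrt ((Real.pi / 8) * lam₁) * Real.sqrt (∑ i, (v i) ^ 2)
        ≤ Real.sqrt P := by
      rw [← hsplit]
      exact Real.sqrt_le_sqrt hPge
    calc |Z| = |a| / Real.sqrt P := by
          rw [hZ_def, abs_div, abs_of_pos hsqrtP]
      _ ≤ |a| / (Real.sqrt ((Real.pi / 8) * lam₁) * Real.sqrt (∑ i, (v i) ^ 2)) := by
          apply div_le_div_of_nonneg_left (abs_nonneg a) (by positivity) hPsqrt_ge
      _ ≤ (Real.sqrt (∑ i, (μ i) ^ 2) * Real.sqrt (∑ i, (v i) ^ 2))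
            / (Real.sqrt ((Real.pi / 8) * lam₁) * Real.sqrt (∑ i, (v i) ^ 2)) := by
          apply div_le_div_of_nonneg_right hCS (by positivity) -- maybe wrong name
      _ = Real.sqrt (∑ i, (μ i) ^ 2) / Real.sqrt ((Real.pi / 8) * lam₁) := by
          rw [mul_div_mul_right _ _ (ne_of_gt hvsqrt)]
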